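/- Let S, A, U be finite nonempty types (environment states, actions, and reward-machine states), let p : S → A → PMF S be a transition kernel, let γ ∈ [0,1) be a discount factor, let δᵤ : U → S → U be the (label-composed) reward-machine state-update function, and let δᵣ : U → U → (S → A → S → ℝ) be the reward-machine state-reward function. Define the product MDP M_Ψ on state space S × U with transition kernel p'((s,u), a) assigning to (s',u') the probability p s a s' if u' = δᵤ u s' and 0 otherwise, and with reward r'((s,u), a, (s',u')) = δᵣ u u' s a s'. Then for every policy π : S × U → PMF A, every initial environment state s₀ ∈ S, every initial machine state u₀ ∈ U, and every horizon T ∈ ℕ, the expected discounted cumulative reward Σ_{t=0}^{T-1} γ^t · δᵣ(u_t, u_{t+1})(s_t, a_t, s_{t+1}) of π over length-T trajectories generated in the MDP-RM (where a_t ∼ π(s_t,u_t), s_{t+1} ∼ p s_t a_t, and u_{t+1} = δᵤ u_t s_{t+1} deterministically) is equal to the expected discounted cumulative reward Σ_{t=0}^{T-1} γ^t · r'((s_t,u_t), a_t, (s_{t+1},u_{t+1})) of π over length-T trajectories generated in the product MDP M_Ψ started at (s₀,u₀) with transition kernel p'. -/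
import Mathlib


open scoped ENNReal

/-- Expected discounted cumulative reward of policy `π` over length-`T` trajectories
generated in the MDP with reward machine: actions `a_t ∼ π (s_t, u_t)`, next
environment states `s_{t+1} ∼ p s_t a_t`, deterministic machine update
`u_{t+1} = δu u_t s_{t+1}`, and step-`t` reward `δr u_t u_{t+1} s_t a_t s_{t+1}`,
discounted by `γ^t`. -/
noncomputable def mdpRMValue {S A U : Type*} [Fintype S] [Fintype A]
    (p : S → A → PMF S) (γ : ℝ) (δu : U → S → U)
    (δr : U → U → S → A → S → ℝ) (π : S × U → PMF A) : ℕ → S → U → ℝ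
  | 0, _, _ => 0
  | T + 1, s, u =>
      ∑ a : A, (π (s, u) a).toReal *
        ∑ s' : S, (p s a s').toReal *
          (δr u (δu u s') s a s' + γ * mdpRMValue p γ δu δr π T s' (δu u s'))

/-- Expected discounted cumulative reward of policy `π` over length-`T` trajectories
generated in the product MDP on `S × U` with transition kernel `p'` and reward `r'`. -/
noncomputable def prodMDPValue {S A U : Type*} [Fintype S] [Fintype A] [Fintype U]
    (p' : S × U → A → PMF (S × U)) (γ : ℝ)
    (r' : S × U → A → S × U → ℝ) (π : S × U → PMF A) : ℕ → S × U → ℝ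
  | 0, _ => 0
  | T + 1, x =>
      ∑ a : A, (π x a).toReal *
        ∑ y : S × U, (p' x a y).toReal *
          (r' x a y + γ * prodMDPValue p' γ r' π T y)

/-- Any policy achieves the same expected (discounted, finite-horizon) reward in the
MDP-RM `Ψ` as in the product MDP `M_Ψ` on `S × U`. -/
theorem mdpRM_prodMDP_expected_reward_eq
    {S A U : Type*} [Fintype S] [Fintype A] [Fintype U] [DecidableEq U]
    [Nonempty S] [Nonempty A] [Nonempty U]
    (p : S → A → PMF S) (γ : ℝ) (hγ : 0 ≤ γ) (hγ1 : γ < 1)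
    (δu : U → S → U) (δr : U → U → S → A → S → ℝ)
    (p' : S × U → A → PMF (S × U))
    (hp' : ∀ (s : S) (u : U) (a : A) (s' : S) (u' : U),
      p' (s, u) a (s', u') = if u' = δu u s' then p s a s' else 0)
    (r' : S × U → A → S × U → ℝ)
    (hr' : ∀ (s : S) (u : U) (a : A) (s' : S) (u' : U),
      r' (s, u) a (s', u') = δr u u' s a s')
    (π : S × U → PMF A) (s₀ : S) (u₀ : U) (T : ℕ) :
    mdpRMValue p γ δu δr π T s₀ u₀ = prodMDPValue p' γ r' π T (s₀, u₀) := by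
  induction T generalizing s₀ u₀ with
  | zero => rfl
  | succ T ih =>
    simp only [mdpRMValue, prodMDPValue]
    refine Finset.sum_congr rfl fun a _ => ?_
    congr 1
    rw [Fintype.sum_prod_type]
    refine Finset.sum_congr rfl fun s' _ => ?_
    rw [Finset.sum_eq_single (δu u₀ s')]
    · rw [hp' , hr', if_pos rfl, ih]
    · intro u' _ hu'
      rw [hp', if_neg hu']
      simp
    · intro h; exact absurd (Finset.mem_univ _) h
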